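/- arXiv:2501.18789 — 4 statements merged into one kernel-verified Lean document; each statement's English description precedes it below -/
import Mathlib

section
/- Let a be a nonzero real number and b > 0. Then there exists a constant C > 0 such that for every x ∈ ℝ, the integral ∫₀^∞ s^{-1/2} exp(-(x - a s)²/(b s)) ds is at most C. -/
open MeasureTheory Real Set

lemma val_aux (c : ℝ) (hc : 0 < c) :
    ∫ s in Ioi (0:ℝ), s ^ (-(1:ℝ)/2) * Real.exp (-(c * s)) = Real.sqrt (π / c) := by
  have h := Real.integral_rpow_mul_exp_neg_mul_Ioi (a := (1:ℝ)/2) (r := c)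
    (by norm_num) hc
  have e : ∀ s : ℝ, s ^ ((1:ℝ)/2 - 1) = s ^ (-(1:ℝ)/2) := by
    intro s; norm_num
  simp only [e, neg_mul] at h ⊢
  rw [h, Real.Gamma_one_half_eq, ← Real.sqrt_eq_rpow, ← Real.sqrt_mul (by positivity) π,
    one_div, inv_mul_eq_div]

lemma key_bound (c : ℝ) (hc : 0 < c) (t : ℝ) :
    (∫ s in Ioi (0:ℝ), s ^ (-(1:ℝ)/2) * Real.exp (-c * (s - t)^2 / s))
      ≤ 2 * Real.sqrt (π / c) := by
  rcases le_or_gt t 0 with ht | ht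
  · set maj : ℝ → ℝ := fun s => s ^ (-(1:ℝ)/2) * Real.exp (-(c * s)) with hmaj
    have hmajint : IntegrableOn maj (Ioi 0) := by
      have h := integrableOn_rpow_mul_exp_neg_mul_rpow
        (show (-1:ℝ) < -(1:ℝ)/2 by norm_num) (one_pos) hc
      refine h.congr_fun (fun s hs => ?_) measurableSet_Ioi
      simp [maj, neg_mul]
    have hle : (∫ s in Ioi (0:ℝ), s ^ (-(1:ℝ)/2) * Real.exp (-c * (s - t)^2 / s))
        ≤ ∫ s in Ioi (0:ℝ), maj s := by
      refine integral_mono_of_nonneg ?_ hmajint ?_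
      · filter_upwards [ae_restrict_mem measurableSet_Ioi] with s hs
        have : (0:ℝ) < s := hs
        positivity
      · filter_upwards [ae_restrict_mem measurableSet_Ioi] with s hs
        have hs0 : (0:ℝ) < s := hs
        have h1 : -c * (s - t)^2 / s ≤ -(c * s) := by
          rw [div_le_iff₀ hs0]
          nlinarith [mul_nonneg hc.le (mul_nonneg_of_nonpos_of_nonpos ht (show t - 2*s ≤ 0 by linarith))]
        have h2 : (0:ℝ) ≤ s ^ (-(1:ℝ)/2) := Real.rpow_nonneg hs0.le _
        exact mul_le_mul_of_nonneg_left (Real.exp_le_exp.2 h1) h2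
    rw [hmaj, val_aux c hc] at hle
    have : (0:ℝ) ≤ Real.sqrt (π / c) := Real.sqrt_nonneg _
    linarith
  · set φ : ℝ → ℝ := fun s => Real.sqrt s - t / Real.sqrt s with hφ
    set φ' : ℝ → ℝ := fun s => 1 / (2 * Real.sqrt s) + t / (2 * s * Real.sqrt s) with hφ'
    have hderiv : ∀ s ∈ Ioi (0:ℝ), HasDerivAt φ (φ' s) s := by
      intro s hs
      have hs0 : (0:ℝ) < s := hs
      have hrt : (0:ℝ) < Real.sqrt s := Real.sqrt_pos.2 hs0
      have h1 : HasDerivAt Real.sqrt (1 / (2 * Real.sqrt s)) s := Real.hasDerivAt_sqrt hs0.ne'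
      have h2 : HasDerivAt (fun s => t / Real.sqrt s)
          (t * (-(1 / (2 * Real.sqrt s)) / (Real.sqrt s) ^ 2)) s := by
        simpa [div_eq_mul_inv] using (h1.inv hrt.ne').const_mul t
      have := h1.sub h2
      refine HasDerivAt.congr_deriv this ?_
      have hsq : (Real.sqrt s) ^ 2 = s := Real.sq_sqrt hs0.le
      rw [hφ']
      field_simp
      nlinarith [hsq, hrt]
    have hmono : StrictMonoOn φ (Ioi 0) := by
      intro s1 h1 s2 h2 h12
      have hp1 : (0:ℝ) < s1 := h1
      have hp2 : (0:ℝ) < s2 := h2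
      have hr1 : (0:ℝ) < Real.sqrt s1 := Real.sqrt_pos.2 hp1
      have hlt : Real.sqrt s1 < Real.sqrt s2 := Real.sqrt_lt_sqrt hp1.le h12
      have : t / Real.sqrt s2 < t / Real.sqrt s1 := div_lt_div_of_pos_left ht hr1 hlt
      simp only [hφ]
      linarith
    have himg : φ '' Ioi 0 = univ := by
      refine eq_univ_of_forall fun u => ?_
      set d : ℝ := Real.sqrt (u ^ 2 + 4 * t) with hd
      have hd2 : d ^ 2 = u ^ 2 + 4 * t := Real.sq_sqrt (by positivity)
      have hdu : |u| < d := by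
        rw [hd, ← Real.sqrt_sq_eq_abs]
        exact Real.sqrt_lt_sqrt (sq_nonneg u) (by linarith)
      set r : ℝ := (u + d) / 2 with hr
      have hr0 : (0:ℝ) < r := by
        have : -u ≤ |u| := neg_le_abs u
        rw [hr]; linarith
      refine ⟨r ^ 2, by simpa using pow_pos hr0 2, ?_⟩
      have hroot : r ^ 2 - u * r - t = 0 := by rw [hr]; nlinarith [hd2]
      simp only [hφ, Real.sqrt_sq hr0.le]
      field_simp
      nlinarith [hroot]
    have hinj := hmono.injOn
    have hd' : ∀ s ∈ Ioi (0:ℝ), HasDerivWithinAt φ (φ' s) (Ioi 0) s :=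
      fun s hs => (hderiv s hs).hasDerivWithinAt
    have hCoV := integral_image_eq_integral_abs_deriv_smul measurableSet_Ioi hd' hinj
      (fun u => Real.exp (-c * u ^ 2))
    rw [himg, MeasureTheory.setIntegral_univ, integral_gaussian] at hCoV
    have hgint : IntegrableOn (fun s => |φ' s| • Real.exp (-c * (φ s) ^ 2)) (Ioi 0) :=
      (integrableOn_image_iff_integrableOn_abs_deriv_smul measurableSet_Ioi hd' hinj
        (fun u => Real.exp (-c * u ^ 2))).1
        (by rw [himg]; exact (integrable_exp_neg_mul_sq hc).integrableOn)
    have hmajint : Integrable (fun s => 2 * (|φ' s| * Real.exp (-c * (φ s) ^ 2)))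
        (volume.restrict (Ioi 0)) := by
      simpa [smul_eq_mul] using hgint.const_mul 2
    have hle : (∫ s in Ioi (0:ℝ), s ^ (-(1:ℝ)/2) * Real.exp (-c * (s - t)^2 / s))
        ≤ ∫ s in Ioi (0:ℝ), 2 * (|φ' s| * Real.exp (-c * (φ s) ^ 2)) := by
      refine integral_mono_of_nonneg ?_ hmajint ?_
      · filter_upwards [ae_restrict_mem measurableSet_Ioi] with s hs
        have : (0:ℝ) < s := hs
        positivity
      · filter_upwards [ae_restrict_mem measurableSet_Ioi] with s hs
        have hs0 : (0:ℝ) < s := hs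
        have hrt : (0:ℝ) < Real.sqrt s := Real.sqrt_pos.2 hs0
        have hsq : (Real.sqrt s) ^ 2 = s := Real.sq_sqrt hs0.le
        have hexp : -c * (s - t) ^ 2 / s = -c * (φ s) ^ 2 := by
          have : (φ s) ^ 2 * s = (s - t) ^ 2 := by
            simp only [hφ]
            field_simp
            rw [hsq]; ring
          field_simp
          nlinarith [this]
        have hpow : s ^ (-(1:ℝ)/2) = (Real.sqrt s)⁻¹ := by
          rw [show (-(1:ℝ)/2) = -((1:ℝ)/2) by norm_num, Real.rpow_neg hs0.le,
            ← Real.sqrt_eq_rpow]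
        have hb : s ^ (-(1:ℝ)/2) ≤ 2 * |φ' s| := by
          rw [hpow, abs_of_pos (by positivity : (0:ℝ) < φ' s), hφ']
          have h0 : (0:ℝ) ≤ t / (2 * s * Real.sqrt s) := by positivity
          have : (Real.sqrt s)⁻¹ = 2 * (1 / (2 * Real.sqrt s)) := by field_simp
          rw [this]
          nlinarith [h0]
        rw [hexp]
        calc s ^ (-(1:ℝ)/2) * Real.exp (-c * (φ s) ^ 2)
            ≤ 2 * |φ' s| * Real.exp (-c * (φ s) ^ 2) :=
              mul_le_mul_of_nonneg_right hb (Real.exp_nonneg _)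
          _ = 2 * (|φ' s| * Real.exp (-c * (φ s) ^ 2)) := by ring
    have hval : ∫ s in Ioi (0:ℝ), 2 * (|φ' s| * Real.exp (-c * (φ s) ^ 2))
        = 2 * Real.sqrt (π / c) := by
      simp only [smul_eq_mul] at hCoV
      rw [MeasureTheory.integral_const_mul, ← hCoV]
    rw [hval] at hle
    exact hle

/-- For a nonzero speed `a` and `b > 0`, the time integral over `(0,∞)` of the moving
Gaussian kernel `θ(z,s) = s^{-1/2} exp(-(z - a s)²/(b s))` evaluated at `z = x` is bounded
uniformly in `x`. -/
theorem moving_gaussian_time_integral_bounded (a b : ℝ) (ha : a ≠ 0) (hb : 0 < b) :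
    ∃ C : ℝ, 0 < C ∧ ∀ x : ℝ,
      (∫ s in Ioi (0:ℝ), s ^ (-(1:ℝ)/2) * Real.exp (-(x - a * s)^2 / (b * s))) ≤ C := by
  have hc : (0:ℝ) < a ^ 2 / b := by positivity
  refine ⟨2 * Real.sqrt (π / (a ^ 2 / b)), by positivity, fun x => ?_⟩
  have hEq : (∫ s in Ioi (0:ℝ), s ^ (-(1:ℝ)/2) * Real.exp (-(x - a * s)^2 / (b * s)))
      = ∫ s in Ioi (0:ℝ), s ^ (-(1:ℝ)/2) *
          Real.exp (-(a ^ 2 / b) * (s - x / a) ^ 2 / s) := by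
    refine setIntegral_congr_fun measurableSet_Ioi (fun s hs => ?_)
    have hs0 : (0:ℝ) < s := hs
    have : -(x - a * s)^2 / (b * s) = -(a ^ 2 / b) * (s - x / a) ^ 2 / s := by
      field_simp
      ring
    rw [this]
  rw [hEq]
  exact key_bound (a ^ 2 / b) hc (x / a)
end

section
/- Let J ∈ ℕ, let a₁,…,a_J be nonzero real numbers and b₁,…,b_J > 0, and set θ(z,s) := Σ_{j=1}^J s^{-1/2} exp(-(z - a_j s)²/(b_j s)). Then there exists C > 0 such that for every f ∈ L¹(ℝ), every t > 0 and every x ∈ ℝ, ∫₀^t |∫_ℝ θ(x - y, s) f(y) dy| ds ≤ C ‖f‖_{L¹(ℝ)}. -/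
open MeasureTheory Real Set

lemma one_kernel (a b z : ℝ) (ha : a ≠ 0) (hb : 0 < b) :
    IntegrableOn (fun s => s ^ (-(1:ℝ)/2) * Real.exp (-(z - a * s)^2 / (b * s))) (Ioi 0) ∧
    (∫ s in Ioi 0, s ^ (-(1:ℝ)/2) * Real.exp (-(z - a * s)^2 / (b * s)))
      ≤ 2 * Real.sqrt (π / (a^2 / b)) := by
  have ha2 : 0 < a^2 := by positivity
  have hα : 0 < a^2 / b := div_pos ha2 hb
  set α := a^2 / b with hαdef
  set r := Real.sqrt (z / a) with hrdef
  have hr : 0 ≤ r := Real.sqrt_nonneg _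
  set G : ℝ → ℝ := fun u => Real.exp (-(α * (u - r)^2)) with hGdef
  set D : ℝ → ℝ := fun s => s ^ (-(1:ℝ)/2) * G (Real.sqrt s) with hDdef
  have hGint : Integrable G := by
    have h0 : Integrable (fun u : ℝ => Real.exp (-(α * u^2))) := by
      simpa [neg_mul] using integrable_exp_neg_mul_sq hα
    exact h0.comp_sub_right r
  have hGnn : ∀ u, 0 ≤ G u := fun u => (Real.exp_pos _).le
  -- key pointwise inequality
  have key : ∀ s ∈ Ioi (0:ℝ),
      s ^ (-(1:ℝ)/2) * Real.exp (-(z - a * s)^2 / (b * s)) ≤ D s := by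
    intro s hs
    have hs : (0:ℝ) < s := hs
    have hrp : (0:ℝ) < s ^ (-(1:ℝ)/2) := Real.rpow_pos_of_pos hs _
    refine mul_le_mul_of_nonneg_left ?_ hrp.le
    apply Real.exp_le_exp.mpr
    have hq : Real.sqrt s ^ 2 = s := Real.sq_sqrt hs.le
    have hq0 : 0 ≤ Real.sqrt s := Real.sqrt_nonneg s
    have hbs : (0:ℝ) < b * s := by positivity
    rw [neg_div, neg_le_neg_iff, le_div_iff₀ hbs]
    have hab : α * b = a^2 := div_mul_cancel₀ _ hb.ne'
    have main : a^2 * s * (Real.sqrt s - r)^2 ≤ (z - a*s)^2 := by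
      set q := Real.sqrt s with hqdef
      rcases le_or_gt 0 (z / a) with hza | hza
      · have hr2 : r^2 = z / a := Real.sq_sqrt hza
        have hz : z = a * r^2 := by rw [hr2]; field_simp
        have h2 : 0 ≤ r^2 + 2*q*r := by nlinarith [mul_nonneg hq0 hr, sq_nonneg r]
        rw [hz, ← hq]
        nlinarith [mul_nonneg (sq_nonneg (a*(q - r))) h2]
      · have hr0 : r = 0 := Real.sqrt_eq_zero'.mpr hza.le
        have hza' : z * a < 0 := by
          rcases div_neg_iff.mp hza with ⟨h1, h2⟩ | ⟨h1, h2⟩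
          exacts [mul_neg_of_pos_of_neg h1 h2, mul_neg_of_neg_of_pos h1 h2]
        rw [hr0, sub_zero, hq]
        nlinarith [mul_pos (neg_pos.mpr hza') hs, sq_nonneg z]
    calc α * (Real.sqrt s - r)^2 * (b * s) = (α * b) * (s * (Real.sqrt s - r)^2) := by ring
      _ = a^2 * s * (Real.sqrt s - r)^2 := by rw [hab]; ring
      _ ≤ (z - a*s)^2 := main
  have hcomp : ∀ x ∈ Ioi (0:ℝ), (|(2:ℝ)| * x ^ ((2:ℝ) - 1)) • D (x ^ (2:ℝ)) = 2 * G x := by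
    intro x hx
    have hx : (0:ℝ) < x := hx
    have h1 : x ^ (2:ℝ) = x ^ 2 := by
      rw [show (2:ℝ) = ((2:ℕ):ℝ) by norm_num, Real.rpow_natCast]
    have h2 : (x ^ (2:ℝ)) ^ (-(1:ℝ)/2) = x⁻¹ := by
      rw [← Real.rpow_mul hx.le]
      norm_num [Real.rpow_neg_one]
    have h3 : Real.sqrt (x ^ (2:ℝ)) = x := by rw [h1, Real.sqrt_sq hx.le]
    simp only [hDdef, smul_eq_mul, h2, h3, Real.rpow_one]
    rw [abs_of_nonneg (by norm_num : (0:ℝ) ≤ (2:ℝ))]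
    have : (2:ℝ) - 1 = 1 := by norm_num
    rw [this, Real.rpow_one]
    field_simp
  have hDint : IntegrableOn D (Ioi 0) := by
    rw [← integrableOn_Ioi_comp_rpow_iff D (two_ne_zero : (2:ℝ) ≠ 0)]
    exact (integrableOn_congr_fun hcomp measurableSet_Ioi).mpr
      ((hGint.const_mul 2).integrableOn)
  have hDval : (∫ s in Ioi 0, D s) ≤ 2 * Real.sqrt (π / α) := by
    have h1 : (∫ s in Ioi 0, D s) = ∫ x in Ioi 0, 2 * G x := by
      rw [← integral_comp_rpow_Ioi D (two_ne_zero : (2:ℝ) ≠ 0)]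
      exact setIntegral_congr_fun measurableSet_Ioi hcomp
    have h2 : (∫ x in Ioi (0:ℝ), G x) ≤ ∫ x : ℝ, G x :=
      setIntegral_le_integral hGint (ae_of_all _ hGnn)
    have h3 : (∫ x : ℝ, G x) = Real.sqrt (π / α) := by
      have h := integral_sub_right_eq_self (μ := volume)
        (fun u : ℝ => Real.exp (-(α * u^2))) r
      rw [hGdef, h, show (fun u : ℝ => Real.exp (-(α * u^2)))
        = fun u => Real.exp (-α * u^2) by funext u; rw [neg_mul], integral_gaussian α]
    rw [h1, MeasureTheory.integral_const_mul]
    linarith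
  have hmeas : Measurable (fun s : ℝ =>
      s ^ (-(1:ℝ)/2) * Real.exp (-(z - a * s)^2 / (b * s))) := by fun_prop
  have hnn : ∀ s ∈ Ioi (0:ℝ),
      0 ≤ s ^ (-(1:ℝ)/2) * Real.exp (-(z - a * s)^2 / (b * s)) := by
    intro s hs
    have hs : (0:ℝ) < s := hs
    positivity
  have hKint : IntegrableOn
      (fun s => s ^ (-(1:ℝ)/2) * Real.exp (-(z - a * s)^2 / (b * s))) (Ioi 0) := by
    refine hDint.mono' hmeas.aestronglyMeasurable ?_
    refine (ae_restrict_iff' measurableSet_Ioi).mpr (ae_of_all _ (fun s hs => ?_))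
    rw [Real.norm_eq_abs, abs_of_nonneg (hnn s hs)]
    exact key s hs
  exact ⟨hKint, le_trans (setIntegral_mono_on hKint hDint measurableSet_Ioi key) hDval⟩

/-- Strichartz-type L¹ bound (aux1) for a finite superposition of Gaussian kernels moving
with nonzero speeds: `∫₀^t |∫ θ(x-y,s) f(y) dy| ds ≤ C ‖f‖_{L¹}`. -/
theorem gaussian_sum_aux1 (J : ℕ) (a b : Fin J → ℝ)
    (ha : ∀ j, a j ≠ 0) (hb : ∀ j, 0 < b j) :
    ∃ C : ℝ, 0 < C ∧ ∀ f : ℝ → ℝ, Integrable f → ∀ t : ℝ, 0 < t → ∀ x : ℝ,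
      (∫ s in Ioc (0:ℝ) t,
        |∫ y : ℝ, (∑ j : Fin J,
            s ^ (-(1:ℝ)/2) * Real.exp (-((x - y) - a j * s)^2 / (b j * s))) * f y|)
        ≤ C * ∫ y : ℝ, |f y| := by
  classical
  set C₀ : ℝ := ∑ j : Fin J, 2 * Real.sqrt (π / ((a j)^2 / (b j))) with hC₀
  have hC₀nn : 0 ≤ C₀ := Finset.sum_nonneg (fun j _ => by positivity)
  refine ⟨C₀ + 1, by positivity, ?_⟩
  intro f hf t ht x
  have hfabs : 0 ≤ ∫ y, |f y| := integral_nonneg fun y => abs_nonneg _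
  set K : ℝ → ℝ → ℝ := fun s z =>
    ∑ j : Fin J, s ^ (-(1:ℝ)/2) * Real.exp (-(z - a j * s)^2 / (b j * s)) with hKdef
  have hKint : ∀ z, IntegrableOn (fun s => K s z) (Ioi 0) := fun z =>
    integrable_finset_sum _ (fun j _ => (one_kernel (a j) (b j) z (ha j) (hb j)).1)
  have hKle : ∀ z, (∫ s in Ioi 0, K s z) ≤ C₀ := by
    intro z
    rw [hKdef]
    rw [integral_finset_sum _ (fun j _ => (one_kernel (a j) (b j) z (ha j) (hb j)).1)]
    exact Finset.sum_le_sum fun j _ => (one_kernel (a j) (b j) z (ha j) (hb j)).2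
  have hKnn : ∀ z, ∀ s ∈ Ioi (0:ℝ), 0 ≤ K s z := by
    intro z s hs
    have hs : (0:ℝ) < s := hs
    exact Finset.sum_nonneg fun j _ => by positivity
  have hlK : ∀ z, (∫⁻ s in Ioi (0:ℝ), ENNReal.ofReal (K s z)) ≤ ENNReal.ofReal C₀ := by
    intro z
    rw [← ofReal_integral_eq_lintegral_ofReal (hKint z)
      ((ae_restrict_iff' measurableSet_Ioi).mpr (ae_of_all _ (hKnn z)))]
    exact ENNReal.ofReal_le_ofReal (hKle z)
  obtain ⟨g, hgmeas, hfg⟩ : ∃ g : ℝ → ℝ, StronglyMeasurable g ∧ f =ᵐ[volume] g :=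
    ⟨hf.1.mk f, hf.1.stronglyMeasurable_mk, hf.1.ae_eq_mk⟩
  have hgm : Measurable g := hgmeas.measurable
  show (∫ s in Ioc (0:ℝ) t, |∫ y : ℝ, K s (x - y) * f y|) ≤ (C₀ + 1) * ∫ y : ℝ, |f y|
  by_cases hFi : IntegrableOn (fun s => |∫ y : ℝ, K s (x - y) * f y|) (Ioc 0 t) volume
  · rw [MeasureTheory.integral_eq_lintegral_of_nonneg_ae
      (ae_of_all _ fun s => abs_nonneg _) hFi.1]
    have hgabs : (∫⁻ y, ENNReal.ofReal |g y|) = ENNReal.ofReal (∫ y, |f y|) := by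
      rw [ofReal_integral_eq_lintegral_ofReal hf.abs (ae_of_all _ fun y => abs_nonneg _)]
      exact (lintegral_congr_ae (hfg.mono fun y hy => by rw [hy])).symm
    have hswapmeas : AEMeasurable
        (fun p : ℝ × ℝ => ENNReal.ofReal (K p.1 (x - p.2)) * ENNReal.ofReal |g p.2|)
        ((volume.restrict (Ioi 0)).prod volume) := by
      apply Measurable.aemeasurable
      apply Measurable.mul (f := fun p : ℝ × ℝ => ENNReal.ofReal (K p.1 (x - p.2)))
        (g := fun p : ℝ × ℝ => ENNReal.ofReal |g p.2|)
      · apply ENNReal.measurable_ofReal.comp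
        apply Finset.measurable_sum
        intro j _
        fun_prop
      · exact ENNReal.measurable_ofReal.comp ((hgm.comp measurable_snd).abs)
    have main : (∫⁻ s in Ioc (0:ℝ) t, ENNReal.ofReal |∫ y : ℝ, K s (x - y) * f y|)
        ≤ ENNReal.ofReal ((C₀ + 1) * ∫ y, |f y|) := by
      calc ∫⁻ s in Ioc (0:ℝ) t, ENNReal.ofReal |∫ y : ℝ, K s (x - y) * f y|
          ≤ ∫⁻ s in Ioc (0:ℝ) t, ∫⁻ y, ENNReal.ofReal (K s (x - y)) * ENNReal.ofReal |g y| := by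
            apply lintegral_mono_ae
            filter_upwards [ae_restrict_mem measurableSet_Ioc] with s hs
            have hs0 : (0:ℝ) < s := hs.1
            calc ENNReal.ofReal |∫ y : ℝ, K s (x - y) * f y|
                = ‖∫ y : ℝ, K s (x - y) * f y‖₊ := (Real.enorm_eq_ofReal_abs _).symm
              _ ≤ ∫⁻ y, ‖K s (x - y) * f y‖₊ := enorm_integral_le_lintegral_enorm _
              _ = ∫⁻ y, ENNReal.ofReal (K s (x - y)) * ENNReal.ofReal |f y| := by
                  apply lintegral_congr
                  intro y
                  rw [← enorm_eq_nnnorm, Real.enorm_eq_ofReal_abs, abs_mul,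
                    abs_of_nonneg (hKnn (x - y) s hs0), ENNReal.ofReal_mul
                    (hKnn (x - y) s hs0)]
              _ = ∫⁻ y, ENNReal.ofReal (K s (x - y)) * ENNReal.ofReal |g y| :=
                  lintegral_congr_ae (hfg.mono fun y hy => by dsimp only; rw [hy])
        _ ≤ ∫⁻ s in Ioi (0:ℝ), ∫⁻ y, ENNReal.ofReal (K s (x - y)) * ENNReal.ofReal |g y| :=
            lintegral_mono_set Ioc_subset_Ioi_self
        _ = ∫⁻ y, ∫⁻ s in Ioi (0:ℝ), ENNReal.ofReal (K s (x - y)) * ENNReal.ofReal |g y| :=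
            lintegral_lintegral_swap hswapmeas
        _ ≤ ∫⁻ y, ENNReal.ofReal C₀ * ENNReal.ofReal |g y| := by
            apply lintegral_mono
            intro y
            dsimp only
            rw [lintegral_mul_const' _ _ ENNReal.ofReal_ne_top]
            exact mul_le_mul_left (hlK (x - y)) _
        _ = ENNReal.ofReal C₀ * ∫⁻ y, ENNReal.ofReal |g y| :=
            lintegral_const_mul' _ _ ENNReal.ofReal_ne_top
        _ = ENNReal.ofReal C₀ * ENNReal.ofReal (∫ y, |f y|) := by rw [hgabs]
        _ ≤ ENNReal.ofReal ((C₀ + 1) * ∫ y, |f y|) := by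
            rw [← ENNReal.ofReal_mul hC₀nn]
            exact ENNReal.ofReal_le_ofReal (by nlinarith)
    refine le_trans (ENNReal.toReal_mono ENNReal.ofReal_ne_top main) ?_
    rw [ENNReal.toReal_ofReal (mul_nonneg (by linarith) hfabs)]
  · rw [MeasureTheory.integral_undef hFi]
    exact mul_nonneg (by linarith) hfabs
end

section
/- Let a be a nonzero real number, b > 0 and ε > 0. Then there exists C = C(a,b,ε) > 0 such that for every t ≥ 1, the function x ↦ ∫₁^t s^{-1-ε} exp(-(a s - |x|)²/(b s)) ds belongs to L²(ℝ) with ‖∫₁^t s^{-1-ε} exp(-(a s - |·|)²/(b s)) ds‖_{L²(ℝ)} ≤ C, with C independent of t. -/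
open MeasureTheory Real Set

lemma kernel_ptwise (A b ε r s : ℝ) (hA : 0 < A) (hb : 0 < b) (hε : 0 < ε)
    (hr : 0 < r) (hs : 1 ≤ s) :
    s ^ (-1 - ε) * Real.exp (-(A * s - r) ^ 2 / (b * s)) ≤
      s ^ (-1 - ε) * Real.exp (-(A * r / (2 * b))) +
      (2 * A / r) ^ (1 + ε) * Real.exp (-(A / (2 * b * r)) * (A * s - r) ^ 2) := by
  have hs0 : (0:ℝ) < s := lt_of_lt_of_le one_pos hs
  have hbs : (0:ℝ) < b * s := by positivity
  by_cases hmid : r ≤ 2 * (A * s) ∧ A * s ≤ 2 * r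
  · have h1 : s ^ (-1 - ε) ≤ (2 * A / r) ^ (1 + ε) := by
      have hx : (0:ℝ) < r / (2 * A) := by positivity
      have h2 : r / (2 * A) ≤ s := by
        rw [div_le_iff₀ (by positivity)]; nlinarith [hmid.1]
      calc s ^ (-1 - ε) ≤ (r / (2 * A)) ^ (-1 - ε) :=
            Real.rpow_le_rpow_of_nonpos hx h2 (by linarith)
        _ = (2 * A / r) ^ (1 + ε) := by
            rw [show (-1 - ε : ℝ) = -(1 + ε) by ring, Real.rpow_neg hx.le,
              ← Real.inv_rpow hx.le, inv_div]
    have h2 : Real.exp (-(A * s - r) ^ 2 / (b * s)) ≤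
        Real.exp (-(A / (2 * b * r)) * (A * s - r) ^ 2) := by
      apply Real.exp_le_exp.2
      rw [neg_div, neg_mul, neg_le_neg_iff, div_mul_eq_mul_div,
        div_le_div_iff₀ (by positivity) hbs]
      nlinarith [mul_nonneg hb.le (sq_nonneg (A * s - r)), hmid.2, sq_nonneg (A*s - r)]
    calc s ^ (-1 - ε) * Real.exp (-(A * s - r) ^ 2 / (b * s))
        ≤ (2 * A / r) ^ (1 + ε) * Real.exp (-(A / (2 * b * r)) * (A * s - r) ^ 2) :=
          mul_le_mul h1 h2 (Real.exp_pos _).le (Real.rpow_nonneg (by positivity) _)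
      _ ≤ _ := le_add_of_nonneg_left (by positivity)
  · have key : A * r * s / 2 ≤ (A * s - r) ^ 2 := by
      rw [not_and_or] at hmid
      rcases hmid with h | h
      · push_neg at h
        nlinarith [mul_nonneg (by nlinarith : (0:ℝ) ≤ r - 2 * (A * s))
          (by nlinarith [mul_pos hA hs0] : (0:ℝ) ≤ 2 * r - A * s)]
      · push_neg at h
        nlinarith [mul_nonneg (by nlinarith : (0:ℝ) ≤ A * s - 2 * r)
          (by nlinarith : (0:ℝ) ≤ 2 * (A * s) - r)]
    have h2 : Real.exp (-(A * s - r) ^ 2 / (b * s)) ≤ Real.exp (-(A * r / (2 * b))) := by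
      apply Real.exp_le_exp.2
      rw [neg_div, neg_le_neg_iff, div_le_div_iff₀ (by positivity) hbs]
      nlinarith [key, hb.le, mul_pos hb hs0]
    calc s ^ (-1 - ε) * Real.exp (-(A * s - r) ^ 2 / (b * s))
        ≤ s ^ (-1 - ε) * Real.exp (-(A * r / (2 * b))) :=
          mul_le_mul_of_nonneg_left h2 (Real.rpow_nonneg hs0.le _)
      _ ≤ _ := le_add_of_nonneg_right (by positivity)

lemma exp_decay_aux (δ r p : ℝ) (hδ : 0 < δ) (hr : 1 ≤ r) (hp : 0 < p) :
    Real.exp (-(δ * r)) ≤ ((⌈p⌉₊ : ℝ) / δ) ^ (⌈p⌉₊ : ℕ) * r ^ (-p) := by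
  set n : ℕ := ⌈p⌉₊ with hn
  have hn0 : 0 < n := Nat.ceil_pos.2 hp
  have hnR : (0:ℝ) < n := Nat.cast_pos.2 hn0
  have hr0 : (0:ℝ) < r := lt_of_lt_of_le one_pos hr
  have hq : (0:ℝ) < δ * r / n := by positivity
  have h1 : (δ * r / n) ^ n ≤ Real.exp (δ * r) := by
    calc (δ * r / n) ^ n ≤ Real.exp (δ * r / n) ^ n := by
          apply pow_le_pow_left₀ hq.le
          linarith [Real.add_one_le_exp (δ * r / n)]
      _ = Real.exp ((n : ℝ) * (δ * r / n)) := (Real.exp_nat_mul _ n).symm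
      _ = Real.exp (δ * r) := by rw [mul_div_cancel₀ _ hnR.ne']
  have h2 : Real.exp (-(δ * r)) ≤ ((δ * r / n) ^ n)⁻¹ := by
    rw [Real.exp_neg]
    exact inv_anti₀ (by positivity) h1
  have h3 : ((δ * r / n) ^ n)⁻¹ = ((n:ℝ) / δ) ^ n * (r ^ (n : ℕ))⁻¹ := by
    rw [← inv_pow, ← inv_pow, ← mul_pow]
    congr 1
    field_simp
  have h4 : (r ^ (n : ℕ) : ℝ)⁻¹ ≤ r ^ (-p) := by
    have : (r ^ (n:ℕ) : ℝ)⁻¹ = r ^ (-(n:ℝ)) := by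
      rw [Real.rpow_neg hr0.le, Real.rpow_natCast]
    rw [this]
    exact Real.rpow_le_rpow_of_exponent_le hr (by linarith [Nat.le_ceil p])
  calc Real.exp (-(δ * r)) ≤ ((δ * r / n) ^ n)⁻¹ := h2
    _ = ((n:ℝ) / δ) ^ n * (r ^ (n : ℕ))⁻¹ := h3
    _ ≤ ((n:ℝ) / δ) ^ n * r ^ (-p) :=
        mul_le_mul_of_nonneg_left h4 (by positivity)

lemma kernel_ptwise2 (a b ε r s : ℝ) (ha : a ≠ 0) (hb : 0 < b) (hε : 0 < ε)
    (hr : 0 < r) (hs : 1 ≤ s) :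
    s ^ (-1 - ε) * Real.exp (-(a * s - r) ^ 2 / (b * s)) ≤
      s ^ (-1 - ε) * Real.exp (-(|a| * r / (2 * b))) +
      (2 * |a| / r) ^ (1 + ε) * Real.exp (-(|a| / (2 * b * r)) * (|a| * s - r) ^ 2) := by
  have hA : (0:ℝ) < |a| := abs_pos.2 ha
  have hs0 : (0:ℝ) < s := lt_of_lt_of_le one_pos hs
  have habs : (|a| * s - r) ^ 2 ≤ (a * s - r) ^ 2 := by
    have key : (a * s - r) ^ 2 - (|a| * s - r) ^ 2
        = (a ^ 2 - |a| ^ 2) * s ^ 2 + 2 * (s * r * (|a| - a)) := by ring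
    rw [sq_abs] at key
    have h3 : 0 ≤ s * r * (|a| - a) :=
      mul_nonneg (mul_nonneg hs0.le hr.le) (sub_nonneg.2 (le_abs_self a))
    linarith
  have hstep1 : Real.exp (-(a * s - r) ^ 2 / (b * s)) ≤
      Real.exp (-(|a| * s - r) ^ 2 / (b * s)) := by
    apply Real.exp_le_exp.2
    have hbs : (0:ℝ) < b * s := by positivity
    exact (div_le_div_iff_of_pos_right hbs).2 (by linarith)
  calc s ^ (-1 - ε) * Real.exp (-(a * s - r) ^ 2 / (b * s))
      ≤ s ^ (-1 - ε) * Real.exp (-(|a| * s - r) ^ 2 / (b * s)) :=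
        mul_le_mul_of_nonneg_left hstep1 (Real.rpow_nonneg hs0.le _)
    _ ≤ _ := kernel_ptwise |a| b ε r s hA hb hε hr hs

set_option maxHeartbeats 1000000 in
lemma integral_ptwise_bound (a b ε : ℝ) (ha : a ≠ 0) (hb : 0 < b) (hε : 0 < ε) :
    ∃ K : ℝ, 0 < K ∧ ∀ t : ℝ, 1 ≤ t → ∀ x : ℝ,
      (∫ s in Icc (1:ℝ) t, s ^ (-1 - ε) * Real.exp (-(a * s - |x|) ^ 2 / (b * s)))
        ≤ K * (1 + |x|) ^ (-(1 / 2 + ε)) := by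
  have hA : (0:ℝ) < |a| := abs_pos.2 ha
  set A : ℝ := |a| with hAdef
  set δ : ℝ := A / (2 * b) with hδdef
  have hδ : 0 < δ := by positivity
  set p : ℝ := 1 / 2 + ε with hpdef
  have hp : 0 < p := by positivity
  set n : ℕ := ⌈p⌉₊ with hndef
  set Cexp : ℝ := ((n : ℝ) / δ) ^ n with hCexp
  have hCexp0 : 0 ≤ Cexp := by positivity
  set C₂ : ℝ := (2 * A) ^ (1 + ε) * (A⁻¹ * Real.sqrt (π / δ)) with hC2
  have hC20 : 0 ≤ C₂ := by positivity
  set S : ℝ := 1 / ε + Cexp * (1 / ε) + C₂ with hS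
  have hS0 : 0 < S := by positivity
  refine ⟨2 ^ p * S, by positivity, ?_⟩
  intro t ht x
  set r : ℝ := |x| with hrdef
  have hr0 : (0:ℝ) ≤ r := abs_nonneg x
  -- basic integrability of s ^ (-1-ε) on Ici 1
  have hexp_lt : (-1 - ε : ℝ) < -1 := by linarith
  have h_int_pow : IntegrableOn (fun s : ℝ => s ^ (-1 - ε)) (Ici 1) := by
    rw [integrableOn_Ici_iff_integrableOn_Ioi]
    exact integrableOn_Ioi_rpow_of_lt hexp_lt one_pos
  have h_int_pow_Icc : IntegrableOn (fun s : ℝ => s ^ (-1 - ε)) (Icc 1 t) :=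
    h_int_pow.mono_set Icc_subset_Ici_self
  have I_pow : (∫ s in Icc (1:ℝ) t, s ^ (-1 - ε)) ≤ 1 / ε := by
    have h1 : (∫ s in Icc (1:ℝ) t, s ^ (-1 - ε)) ≤ ∫ s in Ici (1:ℝ), s ^ (-1 - ε) := by
      apply setIntegral_mono_set h_int_pow
      · filter_upwards [ae_restrict_mem measurableSet_Ici] with s hs
        have : (1:ℝ) ≤ s := hs
        positivity
      · exact (Icc_subset_Ici_self).eventuallyLE
    have h2 : (∫ s in Ici (1:ℝ), s ^ (-1 - ε)) = 1 / ε := by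
      rw [integral_Ici_eq_integral_Ioi, integral_Ioi_rpow_of_lt hexp_lt one_pos]
      have he : (-1 - ε + 1) = -ε := by ring
      rw [he, Real.one_rpow, div_neg, neg_div, neg_neg]
    linarith
  -- integrability of the integrand on Icc 1 t
  have hf_cont : ContinuousOn
      (fun s : ℝ => s ^ (-1 - ε) * Real.exp (-(a * s - r) ^ 2 / (b * s))) (Icc 1 t) := by
    apply ContinuousOn.mul
    · exact ContinuousOn.rpow_const continuousOn_id
        (fun s hs => Or.inl (by have := hs.1; positivity))
    · apply ContinuousOn.rexp
      apply ContinuousOn.div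
      · exact (Continuous.continuousOn (by continuity))
      · exact (Continuous.continuousOn (by continuity))
      · intro s hs
        have := hs.1
        positivity
  have hf_int : IntegrableOn
      (fun s : ℝ => s ^ (-1 - ε) * Real.exp (-(a * s - r) ^ 2 / (b * s))) (Icc 1 t) :=
    hf_cont.integrableOn_compact isCompact_Icc
  rcases le_or_gt r 1 with hr1 | hr1
  · -- small r
    have hstep : (∫ s in Icc (1:ℝ) t, s ^ (-1 - ε) * Real.exp (-(a * s - r) ^ 2 / (b * s)))
        ≤ ∫ s in Icc (1:ℝ) t, s ^ (-1 - ε) := by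
      apply setIntegral_mono_on hf_int h_int_pow_Icc measurableSet_Icc
      intro s hs
      have hs1 : (1:ℝ) ≤ s := hs.1
      have : Real.exp (-(a * s - r) ^ 2 / (b * s)) ≤ 1 := by
        rw [Real.exp_le_one_iff]
        apply div_nonpos_of_nonpos_of_nonneg (neg_nonpos.2 (sq_nonneg _)) (by positivity)
      calc s ^ (-1 - ε) * Real.exp (-(a * s - r) ^ 2 / (b * s))
          ≤ s ^ (-1 - ε) * 1 := mul_le_mul_of_nonneg_left this (by positivity)
        _ = s ^ (-1 - ε) := mul_one _
    have hfinal : 1 / ε ≤ 2 ^ p * S * (1 + r) ^ (-p) := by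
      have hb2 : (2:ℝ) ^ (-p) ≤ (1 + r) ^ (-p) :=
        Real.rpow_le_rpow_of_nonpos (by positivity) (by linarith) (by linarith)
      have hKS : 2 ^ p * S * (2:ℝ) ^ (-p) = S := by
        rw [Real.rpow_neg (by norm_num : (0:ℝ) ≤ 2)]
        field_simp
      have h1 : 1 / ε ≤ S := by
        have : 0 ≤ Cexp * (1/ε) := by positivity
        rw [hS]; linarith
      calc 1 / ε ≤ S := h1
        _ = 2 ^ p * S * (2:ℝ) ^ (-p) := hKS.symm
        _ ≤ 2 ^ p * S * (1 + r) ^ (-p) := by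
            apply mul_le_mul_of_nonneg_left hb2 (by positivity)
    calc _ ≤ ∫ s in Icc (1:ℝ) t, s ^ (-1 - ε) := hstep
      _ ≤ 1 / ε := I_pow
      _ ≤ _ := hfinal
  · -- large r
    have hrpos : (0:ℝ) < r := by linarith
    set c : ℝ := A / (2 * b * r) with hc
    have hcpos : 0 < c := by positivity
    -- the two dominating functions
    set f₁ : ℝ → ℝ := fun s => s ^ (-1 - ε) * Real.exp (-(A * r / (2 * b))) with hf1
    set f₂ : ℝ → ℝ := fun s => (2 * A / r) ^ (1 + ε) * Real.exp (-c * (A * s - r) ^ 2) with hf2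
    have hgauss : Integrable (fun s : ℝ => Real.exp (-c * (A * s - r) ^ 2)) := by
      have h0 : Integrable (fun u : ℝ => Real.exp (-c * u ^ 2)) := integrable_exp_neg_mul_sq hcpos
      have h1 : Integrable (fun y : ℝ => Real.exp (-c * (y - r) ^ 2)) := h0.comp_sub_right r
      exact h1.comp_mul_left' hA.ne'
    have hf2_int : Integrable f₂ := hgauss.const_mul _
    have hf1_int : IntegrableOn f₁ (Icc 1 t) := h_int_pow_Icc.mul_const _
    -- pointwise bound
    have hptwise : ∀ s ∈ Icc (1:ℝ) t,
        s ^ (-1 - ε) * Real.exp (-(a * s - r) ^ 2 / (b * s)) ≤ f₁ s + f₂ s := by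
      intro s hs
      have := kernel_ptwise2 a b ε r s ha hb hε hrpos hs.1
      rw [hf1, hf2, hc, hAdef]
      exact this
    -- split the integral
    have hsplit : (∫ s in Icc (1:ℝ) t, s ^ (-1 - ε) * Real.exp (-(a * s - r) ^ 2 / (b * s)))
        ≤ (∫ s in Icc (1:ℝ) t, f₁ s) + ∫ s in Icc (1:ℝ) t, f₂ s := by
      rw [← integral_add hf1_int (hf2_int.integrableOn)]
      exact setIntegral_mono_on hf_int (hf1_int.add hf2_int.integrableOn)
        measurableSet_Icc hptwise
    -- bound ∫ f₁
    have hI1 : (∫ s in Icc (1:ℝ) t, f₁ s) ≤ Cexp * (1 / ε) * r ^ (-p) := by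
      have h1 : (∫ s in Icc (1:ℝ) t, f₁ s)
          = (∫ s in Icc (1:ℝ) t, s ^ (-1 - ε)) * Real.exp (-(A * r / (2 * b))) := by
        rw [hf1]; exact integral_mul_const _ _
      have hAr : A * r / (2 * b) = δ * r := by rw [hδdef]; ring
      have hexp : Real.exp (-(A * r / (2 * b))) ≤ Cexp * r ^ (-p) := by
        rw [hAr, hCexp, hndef]
        exact exp_decay_aux δ r p hδ hr1.le hp
      rw [h1]
      calc (∫ s in Icc (1:ℝ) t, s ^ (-1 - ε)) * Real.exp (-(A * r / (2 * b)))
          ≤ (1 / ε) * (Cexp * r ^ (-p)) := by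
            apply mul_le_mul I_pow hexp (Real.exp_pos _).le (by positivity)
        _ = Cexp * (1 / ε) * r ^ (-p) := by ring
    -- bound ∫ f₂
    have hI2 : (∫ s in Icc (1:ℝ) t, f₂ s) ≤ C₂ * r ^ (-p) := by
      have h1 : (∫ s in Icc (1:ℝ) t, f₂ s) ≤ ∫ s, f₂ s := by
        apply setIntegral_le_integral hf2_int
        filter_upwards with s
        rw [hf2]
        positivity
      have h2 : (∫ s, f₂ s) = (2 * A / r) ^ (1 + ε) *
          (|A⁻¹| * Real.sqrt (π / c)) := by
        rw [hf2, integral_const_mul]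
        congr 1
        have : (fun s : ℝ => Real.exp (-c * (A * s - r) ^ 2))
            = fun s : ℝ => (fun y : ℝ => Real.exp (-c * (y - r) ^ 2)) (A * s) := rfl
        rw [this, Measure.integral_comp_mul_left (fun y : ℝ => Real.exp (-c * (y - r) ^ 2)) A,
          smul_eq_mul]
        congr 1
        rw [integral_sub_right_eq_self (fun u : ℝ => Real.exp (-c * u ^ 2)) r,
          integral_gaussian]
      have h3 : (2 * A / r) ^ (1 + ε) * (|A⁻¹| * Real.sqrt (π / c)) = C₂ * r ^ (-p) := by
        have e1 : |A⁻¹| = A⁻¹ := abs_of_pos (by positivity)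
        have e2 : (π / c) = (π / δ) * r := by
          rw [hc, hδdef]
          field_simp
        have e3 : Real.sqrt (π / c) = Real.sqrt (π / δ) * r ^ (1/2 : ℝ) := by
          rw [e2, Real.sqrt_mul (by positivity), Real.sqrt_eq_rpow r]
        have e4 : (2 * A / r) ^ (1 + ε) = (2 * A) ^ (1 + ε) * r ^ (-(1 + ε)) := by
          rw [Real.div_rpow (by positivity) hr0, Real.rpow_neg hr0, div_eq_mul_inv]
        rw [e1, e3, e4, hC2]
        have e5 : r ^ (-(1 + ε)) * r ^ (1/2 : ℝ) = r ^ (-p) := by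
          rw [← Real.rpow_add hrpos, hpdef]
          ring_nf
        calc (2 * A) ^ (1 + ε) * r ^ (-(1 + ε)) * (A⁻¹ * (Real.sqrt (π / δ) * r ^ (1/2:ℝ)))
            = (2 * A) ^ (1 + ε) * (A⁻¹ * Real.sqrt (π / δ)) * (r ^ (-(1+ε)) * r ^ (1/2:ℝ)) := by
              ring
          _ = (2 * A) ^ (1 + ε) * (A⁻¹ * Real.sqrt (π / δ)) * r ^ (-p) := by rw [e5]
      calc (∫ s in Icc (1:ℝ) t, f₂ s) ≤ ∫ s, f₂ s := h1
        _ = C₂ * r ^ (-p) := by rw [h2, h3]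
    -- combine
    have hcomb : Cexp * (1 / ε) * r ^ (-p) + C₂ * r ^ (-p) ≤ 2 ^ p * S * (1 + r) ^ (-p) := by
      have hρ : r ^ (-p) ≤ 2 ^ p * (1 + r) ^ (-p) := by
        have h2 : r ^ (-p) ≤ ((1 + r) / 2) ^ (-p) :=
          Real.rpow_le_rpow_of_nonpos (by positivity) (by linarith) (by linarith)
        have h1 : ((1 + r) / 2) ^ (-p) = 2 ^ p * (1 + r) ^ (-p) := by
          rw [Real.div_rpow (by positivity) (by norm_num),
            Real.rpow_neg (by positivity : (0:ℝ) ≤ 1 + r),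
            Real.rpow_neg (by norm_num : (0:ℝ) ≤ 2)]
          field_simp
        linarith
      calc Cexp * (1 / ε) * r ^ (-p) + C₂ * r ^ (-p)
          = (Cexp * (1 / ε) + C₂) * r ^ (-p) := by ring
        _ ≤ S * r ^ (-p) := by
            apply mul_le_mul_of_nonneg_right ?_ (by positivity)
            rw [hS]; have : 0 < 1/ε := by positivity
            linarith
        _ ≤ S * (2 ^ p * (1 + r) ^ (-p)) := mul_le_mul_of_nonneg_left hρ hS0.le
        _ = 2 ^ p * S * (1 + r) ^ (-p) := by ring
    calc _ ≤ (∫ s in Icc (1:ℝ) t, f₁ s) + ∫ s in Icc (1:ℝ) t, f₂ s := hsplit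
      _ ≤ Cexp * (1 / ε) * r ^ (-p) + C₂ * r ^ (-p) := add_le_add hI1 hI2
      _ ≤ 2 ^ p * S * (1 + r) ^ (-p) := hcomb
/-- The L² bound (test)/(8.25): for nonzero speed `a`, `b > 0` and `ε > 0`, the function
`x ↦ ∫₁^t s^{-1-ε} exp(-(a s - |x|)²/(b s)) ds` lies in `L²(ℝ)` with norm bounded by a
constant independent of `t ≥ 1`. -/
theorem time_integrated_gaussian_tail_L2 (a b ε : ℝ) (ha : a ≠ 0) (hb : 0 < b)
    (hε : 0 < ε) :
    ∃ C : ℝ, 0 < C ∧ ∀ t : ℝ, 1 ≤ t →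
      MemLp (fun x : ℝ =>
          ∫ s in Icc (1:ℝ) t, s ^ (-1 - ε) * Real.exp (-(a * s - |x|)^2 / (b * s))) 2 volume ∧
      eLpNorm (fun x : ℝ =>
          ∫ s in Icc (1:ℝ) t, s ^ (-1 - ε) * Real.exp (-(a * s - |x|)^2 / (b * s))) 2 volume
        ≤ ENNReal.ofReal C := by
  obtain ⟨K, hK, hbound⟩ := integral_ptwise_bound a b ε ha hb hε
  set G : ℝ → ℝ := fun x => K * (1 + |x|) ^ (-(1 / 2 + ε)) with hGdef
  have hG0 : ∀ x, 0 ≤ G x := by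
    intro x
    exact mul_nonneg hK.le (Real.rpow_nonneg (by positivity) _)
  have hGc : Continuous G :=
    continuous_const.mul ((continuous_const.add continuous_abs).rpow_const
      (fun x => Or.inl (by show (1:ℝ) + |x| ≠ 0; positivity)))
  have hGmem : MemLp G 2 volume := by
    rw [memLp_two_iff_integrable_sq hGc.aestronglyMeasurable]
    have h1 : Integrable (fun x : ℝ => (1 + ‖x‖) ^ (-(1 + 2 * ε))) := by
      apply integrable_one_add_norm (E := ℝ)
      simp only [Module.finrank_self, Nat.cast_one]
      linarith
    apply (h1.const_mul (K ^ 2)).congr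
    filter_upwards with x
    have hx : (0:ℝ) < 1 + |x| := by positivity
    rw [hGdef]
    simp only [Real.norm_eq_abs]
    rw [mul_pow]
    congr 1
    rw [sq, ← Real.rpow_add hx]
    congr 1
    ring
  refine ⟨(eLpNorm G 2 volume).toReal + 1, by positivity, ?_⟩
  intro t ht
  set F : ℝ → ℝ := fun x =>
    ∫ s in Icc (1:ℝ) t, s ^ (-1 - ε) * Real.exp (-(a * s - |x|)^2 / (b * s)) with hFdef
  have hF0 : ∀ x, 0 ≤ F x := by
    intro x
    apply setIntegral_nonneg measurableSet_Icc
    intro s hs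
    have hs1 : (1:ℝ) ≤ s := hs.1
    positivity
  have hFG : ∀ x, ‖F x‖ ≤ ‖G x‖ := by
    intro x
    rw [Real.norm_eq_abs, Real.norm_eq_abs, abs_of_nonneg (hF0 x), abs_of_nonneg (hG0 x)]
    exact hbound t ht x
  have hFm : AEStronglyMeasurable F volume := by
    have hmeas : StronglyMeasurable (fun q : ℝ × ℝ =>
        q.2 ^ (-1 - ε) * Real.exp (-(a * q.2 - |q.1|) ^ 2 / (b * q.2))) := by
      apply Measurable.stronglyMeasurable
      fun_prop
    exact (hmeas.integral_prod_right' (ν := volume.restrict (Icc 1 t))).aestronglyMeasurable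
  constructor
  · exact hGmem.of_le hFm (Filter.Eventually.of_forall hFG)
  · calc eLpNorm F 2 volume ≤ eLpNorm G 2 volume :=
        eLpNorm_mono_ae (Filter.Eventually.of_forall hFG)
      _ = ENNReal.ofReal ((eLpNorm G 2 volume).toReal) :=
        (ENNReal.ofReal_toReal hGmem.eLpNorm_ne_top).symm
      _ ≤ ENNReal.ofReal ((eLpNorm G 2 volume).toReal + 1) :=
        ENNReal.ofReal_le_ofReal (by linarith)
end

section
/- Let a > 0, η > 0 and M > 0. Then there exists C > 0 such that for every s ≥ 0 and every measurable function g : ℝ × [0,s] → ℝ satisfying ‖g(·,τ)‖_{L^∞(ℝ)} ≤ (1+τ)^{-1} for all τ ∈ [0,s], ∫₀^s ∫_{-∞}^0 (s-τ)^{-1/2} e^{η y} exp(-(y + a(s-τ))²/(M(s-τ))) |g(y,τ)| dy dτ ≤ C (1+s)^{-1/2}. -/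
open MeasureTheory Real Set

lemma ucb_exp_integrableOn_Iic {m : ℝ} (hm : 0 < m) :
    IntegrableOn (fun y : ℝ => Real.exp (m * y)) (Iic 0) := by
  have h : IntegrableOn (fun x : ℝ => Real.exp (-m * x)) (Ioi 0) :=
    exp_neg_integrableOn_Ioi 0 hm
  have h_map_neg : ((volume : Measure ℝ).restrict (Ioi 0)).map Neg.neg
      = (volume : Measure ℝ).restrict (Iio 0) := by
    conv => rhs; rw [← Measure.map_neg_eq_self (volume : Measure ℝ),
      measurableEmbedding_neg.restrict_map]
    simp
  have hIio : IntegrableOn (fun y : ℝ => Real.exp (m * y)) (Iio 0) := by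
    rw [IntegrableOn, ← h_map_neg, measurableEmbedding_neg.integrable_map_iff]
    refine h.congr_fun (fun x _ => ?_) measurableSet_Ioi
    simp [Function.comp, neg_mul, mul_neg]
  exact (integrableOn_Iic_iff_integrableOn_Iio).2 hIio

lemma ucb_psi_integrableOn {c : ℝ} (hc : 0 < c) :
    IntegrableOn (fun u : ℝ => (u ^ (-(1:ℝ)/2) + 1) * Real.exp (-(c * u))) (Ioi 0) := by
  have h1 : IntegrableOn (fun x : ℝ => x ^ (-(1:ℝ)/2) * Real.exp (-c * x ^ (1:ℝ))) (Ioi 0) :=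
    integrableOn_rpow_mul_exp_neg_mul_rpow (by norm_num) zero_lt_one hc
  have h2 : IntegrableOn (fun x : ℝ => Real.exp (-c * x)) (Ioi 0) :=
    exp_neg_integrableOn_Ioi 0 hc
  have hsum : IntegrableOn
      (fun x : ℝ => x ^ (-(1:ℝ)/2) * Real.exp (-c * x ^ (1:ℝ)) + Real.exp (-c * x))
      (Ioi 0) := h1.add h2
  refine hsum.congr_fun (fun x _ => ?_) measurableSet_Ioi
  simp only [Real.rpow_one]
  ring_nf

lemma ucb_exp_key {a η M c t y : ℝ} (hη : 0 < η) (hM : 0 < M)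
    (hc1 : c ≤ η * a / 4) (hc2 : c ≤ a ^ 2 / (4 * M)) (ht : 0 < t) (hy : y ≤ 0) :
    Real.exp (η * y) * Real.exp (-(y + a * t) ^ 2 / (M * t))
      ≤ Real.exp (η / 2 * y) * Real.exp (-(c * t)) := by
  rw [← Real.exp_add, ← Real.exp_add]
  apply Real.exp_le_exp.2
  rw [neg_div]
  have hMt : 0 < M * t := mul_pos hM ht
  rcases le_or_gt y (-(a * t / 2)) with h | h
  · have h1 : (0:ℝ) ≤ (y + a * t) ^ 2 / (M * t) := by positivity
    have h2 : c * t ≤ η * a / 4 * t := mul_le_mul_of_nonneg_right hc1 ht.le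
    have h3 : η / 2 * y ≤ η / 2 * (-(a * t / 2)) :=
      mul_le_mul_of_nonneg_left h (by linarith)
    have h4 : η * y ≤ η / 2 * y := by nlinarith
    have h3' : η / 2 * -(a * t / 2) = -(η * a / 4 * t) := by ring
    linarith
  · have h1 : a * t / 2 ≤ y + a * t := by linarith
    have h5 : c * (4 * M) ≤ a ^ 2 := (le_div_iff₀ (by positivity)).1 hc2
    have h2 : (a * t / 2) ^ 2 ≤ (y + a * t) ^ 2 := by nlinarith
    have h3 : c * t ≤ (y + a * t) ^ 2 / (M * t) := by
      rw [le_div_iff₀ hMt]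
      nlinarith [sq_nonneg t]
    have h4 : η * y ≤ η / 2 * y := by nlinarith
    linarith

lemma ucb_scalar {s τ t : ℝ} (hτ : 0 < τ) (ht : 0 < t) (hst : s = τ + t) :
    (1 + τ)⁻¹ * t ^ (-(1:ℝ)/2) ≤ (1 + s) ^ (-(1:ℝ)/2) * (t ^ (-(1:ℝ)/2) + 1) := by
  have hs0 : (0:ℝ) ≤ 1 + s := by nlinarith
  have hrw : ∀ x : ℝ, 0 ≤ x → x ^ (-(1:ℝ)/2) = (Real.sqrt x)⁻¹ := fun x hx => by
    rw [neg_div, Real.rpow_neg hx, ← Real.sqrt_eq_rpow]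
  rw [hrw t ht.le, hrw (1 + s) hs0]
  set u := Real.sqrt t with hu
  set w := Real.sqrt (1 + s) with hw
  have hu0 : 0 < u := Real.sqrt_pos.2 ht
  have hw0 : 0 < w := Real.sqrt_pos.2 (by nlinarith)
  have hv : Real.sqrt (1 + t) ≤ 1 + u := by
    have h1 : (1:ℝ) + t ≤ (1 + u) ^ 2 := by
      nlinarith [Real.sq_sqrt ht.le, Real.sqrt_nonneg t]
    calc Real.sqrt (1 + t) ≤ Real.sqrt ((1 + u) ^ 2) := Real.sqrt_le_sqrt h1
      _ = 1 + u := Real.sqrt_sq (by positivity)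
  have hst2 : w ≤ (1 + τ) * Real.sqrt (1 + t) := by
    have h1 : 1 + s ≤ ((1 + τ) * Real.sqrt (1 + t)) ^ 2 := by
      have hq : Real.sqrt (1 + t) ^ 2 = 1 + t :=
        Real.sq_sqrt (by linarith)
      rw [mul_pow, hq]
      nlinarith [hτ.le, ht.le, mul_pos hτ ht, sq_nonneg τ,
        mul_nonneg (mul_nonneg hτ.le hτ.le) ht.le]
    calc w ≤ Real.sqrt (((1 + τ) * Real.sqrt (1 + t)) ^ 2) := Real.sqrt_le_sqrt h1
      _ = (1 + τ) * Real.sqrt (1 + t) := Real.sqrt_sq (by positivity)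
  have key : w ≤ (1 + τ) * (1 + u) := by nlinarith [Real.sqrt_nonneg (1 + t)]
  have h2 : (1 + τ)⁻¹ ≤ w⁻¹ * (1 + u) := by
    rw [inv_eq_one_div, show w⁻¹ * (1 + u) = (1 + u) / w by
      rw [div_eq_mul_inv]; ring, div_le_div_iff₀ (by linarith) hw0]
    nlinarith
  calc (1 + τ)⁻¹ * u⁻¹ ≤ (w⁻¹ * (1 + u)) * u⁻¹ :=
        mul_le_mul_of_nonneg_right h2 (by positivity)
    _ = w⁻¹ * (u⁻¹ + 1) := by field_simp

noncomputable def ucbPsi (c u : ℝ) : ℝ := (u ^ (-(1:ℝ)/2) + 1) * Real.exp (-(c * u))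

lemma ucbPsi_int {c : ℝ} (hc : 0 < c) : IntegrableOn (ucbPsi c) (Ioi 0) :=
  ucb_psi_integrableOn hc

lemma ucbPsi_nonneg {c u : ℝ} (hu : 0 ≤ u) : 0 ≤ ucbPsi c u := by
  unfold ucbPsi
  have := Real.rpow_nonneg hu (-(1:ℝ)/2)
  positivity


/-- Double-integral estimate from the δ̇ bound of Lemma 3.1: for a source `g` with
`‖g(·,τ)‖_{L^∞} ≤ (1+τ)^{-1}`, the weighted Gaussian integral decays like `(1+s)^{-1/2}`. -/
theorem undercompressive_correction_bound (a η M : ℝ) (ha : 0 < a) (hη : 0 < η)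
    (hM : 0 < M) :
    ∃ C : ℝ, 0 < C ∧ ∀ s : ℝ, 0 ≤ s → ∀ g : ℝ → ℝ → ℝ,
      Measurable (Function.uncurry g) →
      (∀ τ ∈ Icc (0:ℝ) s, eLpNorm (fun y => g y τ) ⊤ volume ≤ ENNReal.ofReal ((1 + τ)⁻¹)) →
      (∫ τ in Ioc (0:ℝ) s, ∫ y in Iic (0:ℝ),
          (s - τ) ^ (-(1:ℝ)/2) * Real.exp (η * y) *
            Real.exp (-(y + a * (s - τ))^2 / (M * (s - τ))) * |g y τ|)
        ≤ C * (1 + s) ^ (-(1:ℝ)/2) := by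

  obtain ⟨c, hc, hc1, hc2⟩ : ∃ c : ℝ, 0 < c ∧ c ≤ η * a / 4 ∧ c ≤ a ^ 2 / (4 * M) :=
    ⟨min (η * a / 4) (a ^ 2 / (4 * M)), lt_min (by positivity) (by positivity),
      min_le_left _ _, min_le_right _ _⟩
  have hψint : IntegrableOn (ucbPsi c) (Ioi 0) := ucbPsi_int hc
  have hKyint : IntegrableOn (fun y : ℝ => Real.exp (η / 2 * y)) (Iic 0) :=
    ucb_exp_integrableOn_Iic (by positivity)
  set Ky := ∫ y in Iic (0:ℝ), Real.exp (η / 2 * y) with hKydef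
  have hKynn : 0 ≤ Ky :=
    setIntegral_nonneg measurableSet_Iic fun y _ => (Real.exp_pos _).le
  set K := ∫ u in Ioi (0:ℝ), ucbPsi c u with hKdef
  have hKnn : 0 ≤ K :=
    setIntegral_nonneg measurableSet_Ioi fun u hu => ucbPsi_nonneg (le_of_lt hu)
  refine ⟨Ky * K + 1, by positivity, fun s hs g hgm hgb => ?_⟩
  have hB : (0:ℝ) ≤ (1 + s) ^ (-(1:ℝ)/2) := Real.rpow_nonneg (by linarith) _
  -- pointwise bound on the inner integral
  have hinner : ∀ τ ∈ Ioc (0:ℝ) s,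
      (∫ y in Iic (0:ℝ), (s - τ) ^ (-(1:ℝ)/2) * Real.exp (η * y) *
          Real.exp (-(y + a * (s - τ))^2 / (M * (s - τ))) * |g y τ|)
        ≤ Ky * ((1 + s) ^ (-(1:ℝ)/2) * ucbPsi c (s - τ)) := by
    intro τ hτ
    have ht0 : 0 ≤ s - τ := by linarith [hτ.2]
    rcases eq_or_lt_of_le ht0 with hteq | ht
    · have hz : ∀ y : ℝ, (s - τ) ^ (-(1:ℝ)/2) * Real.exp (η * y) *
          Real.exp (-(y + a * (s - τ))^2 / (M * (s - τ))) * |g y τ| = 0 := by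
        intro y
        rw [← hteq, Real.zero_rpow (by norm_num)]
        ring
      simp only [hz, integral_zero]
      exact mul_nonneg hKynn (mul_nonneg hB (ucbPsi_nonneg ht0))
    · have hτ0 : 0 < τ := hτ.1
      have hgae : ∀ᵐ y ∂(volume.restrict (Iic (0:ℝ))), |g y τ| ≤ (1 + τ)⁻¹ := by
        have h2 : eLpNormEssSup (fun y => g y τ) volume ≤ ENNReal.ofReal ((1 + τ)⁻¹) := by
          have := hgb τ ⟨hτ0.le, hτ.2⟩
          rwa [eLpNorm_exponent_top] at this
        refine ae_restrict_of_ae ?_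
        filter_upwards [enorm_ae_le_eLpNormEssSup (fun y => g y τ) volume] with y hy
        have h3 : ENNReal.ofReal |g y τ| ≤ ENNReal.ofReal ((1 + τ)⁻¹) := by
          rw [← Real.norm_eq_abs, ofReal_norm]
          exact hy.trans h2
        exact (ENNReal.ofReal_le_ofReal_iff (by positivity)).1 h3
      have h0 : (0:ℝ) ≤ (s - τ) ^ (-(1:ℝ)/2) := Real.rpow_nonneg ht0 _
      have hmaj : Integrable (fun y : ℝ =>
          ((1 + τ)⁻¹ * ((s - τ) ^ (-(1:ℝ)/2) * Real.exp (-(c * (s - τ))))) *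
            Real.exp (η / 2 * y)) (volume.restrict (Iic 0)) := hKyint.const_mul _
      have hle : (∫ y in Iic (0:ℝ), (s - τ) ^ (-(1:ℝ)/2) * Real.exp (η * y) *
            Real.exp (-(y + a * (s - τ))^2 / (M * (s - τ))) * |g y τ|)
          ≤ ∫ y in Iic (0:ℝ),
              ((1 + τ)⁻¹ * ((s - τ) ^ (-(1:ℝ)/2) * Real.exp (-(c * (s - τ))))) *
                Real.exp (η / 2 * y) := by
        refine integral_mono_of_nonneg ?_ hmaj ?_
        · refine ae_of_all _ fun y => ?_
          exact mul_nonneg (mul_nonneg (mul_nonneg h0 (Real.exp_pos _).le)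
            (Real.exp_pos _).le) (abs_nonneg _)
        · filter_upwards [hgae, ae_restrict_mem measurableSet_Iic] with y hgy hy
          have hkey := ucb_exp_key (a := a) (η := η) (M := M) (c := c) (t := s - τ) (y := y)
            hη hM hc1 hc2 ht hy
          calc (s - τ) ^ (-(1:ℝ)/2) * Real.exp (η * y) *
              Real.exp (-(y + a * (s - τ))^2 / (M * (s - τ))) * |g y τ|
              ≤ (s - τ) ^ (-(1:ℝ)/2) * Real.exp (η * y) *
                Real.exp (-(y + a * (s - τ))^2 / (M * (s - τ))) * (1 + τ)⁻¹ :=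
                mul_le_mul_of_nonneg_left hgy
                  (mul_nonneg (mul_nonneg h0 (Real.exp_pos _).le) (Real.exp_pos _).le)
            _ ≤ (s - τ) ^ (-(1:ℝ)/2) *
                (Real.exp (η / 2 * y) * Real.exp (-(c * (s - τ)))) * (1 + τ)⁻¹ := by
                refine mul_le_mul_of_nonneg_right ?_ (by positivity)
                rw [mul_assoc]
                exact mul_le_mul_of_nonneg_left hkey h0
            _ = ((1 + τ)⁻¹ * ((s - τ) ^ (-(1:ℝ)/2) * Real.exp (-(c * (s - τ))))) *
                Real.exp (η / 2 * y) := by ring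
      have heq : (∫ y in Iic (0:ℝ),
            ((1 + τ)⁻¹ * ((s - τ) ^ (-(1:ℝ)/2) * Real.exp (-(c * (s - τ))))) *
              Real.exp (η / 2 * y))
          = ((1 + τ)⁻¹ * ((s - τ) ^ (-(1:ℝ)/2) * Real.exp (-(c * (s - τ))))) * Ky :=
        integral_const_mul _ _
      have hscal := ucb_scalar (s := s) (τ := τ) (t := s - τ) hτ0 ht (by ring)
      have hA : (1 + τ)⁻¹ * ((s - τ) ^ (-(1:ℝ)/2) * Real.exp (-(c * (s - τ))))
          ≤ (1 + s) ^ (-(1:ℝ)/2) * ucbPsi c (s - τ) := by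
        unfold ucbPsi
        calc (1 + τ)⁻¹ * ((s - τ) ^ (-(1:ℝ)/2) * Real.exp (-(c * (s - τ))))
            = ((1 + τ)⁻¹ * (s - τ) ^ (-(1:ℝ)/2)) * Real.exp (-(c * (s - τ))) := by ring
          _ ≤ ((1 + s) ^ (-(1:ℝ)/2) * ((s - τ) ^ (-(1:ℝ)/2) + 1)) *
              Real.exp (-(c * (s - τ))) :=
              mul_le_mul_of_nonneg_right hscal (Real.exp_pos _).le
          _ = (1 + s) ^ (-(1:ℝ)/2) * (((s - τ) ^ (-(1:ℝ)/2) + 1) *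
              Real.exp (-(c * (s - τ)))) := by ring
      calc (∫ y in Iic (0:ℝ), (s - τ) ^ (-(1:ℝ)/2) * Real.exp (η * y) *
            Real.exp (-(y + a * (s - τ))^2 / (M * (s - τ))) * |g y τ|)
          ≤ ((1 + τ)⁻¹ * ((s - τ) ^ (-(1:ℝ)/2) * Real.exp (-(c * (s - τ))))) * Ky := by
            rw [← heq]; exact hle
        _ ≤ ((1 + s) ^ (-(1:ℝ)/2) * ucbPsi c (s - τ)) * Ky :=
            mul_le_mul_of_nonneg_right hA hKynn
        _ = Ky * ((1 + s) ^ (-(1:ℝ)/2) * ucbPsi c (s - τ)) := by ring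
  -- outer integral comparison
  have hψcomp : IntegrableOn (fun τ => ucbPsi c (s - τ)) (Ioc 0 s) := by
    have h1 : IntegrableOn (ucbPsi c) (Ioc 0 s) := hψint.mono_set Ioc_subset_Ioi_self
    have h2 : IntervalIntegrable (ucbPsi c) volume 0 s :=
      (intervalIntegrable_iff_integrableOn_Ioc_of_le hs).2 h1
    have h3 := (h2.comp_sub_left s).symm
    rw [sub_zero, sub_self] at h3
    exact (intervalIntegrable_iff_integrableOn_Ioc_of_le hs).1 h3
  have houter : (∫ τ in Ioc (0:ℝ) s, ∫ y in Iic (0:ℝ),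
        (s - τ) ^ (-(1:ℝ)/2) * Real.exp (η * y) *
          Real.exp (-(y + a * (s - τ))^2 / (M * (s - τ))) * |g y τ|)
      ≤ ∫ τ in Ioc (0:ℝ) s, Ky * ((1 + s) ^ (-(1:ℝ)/2) * ucbPsi c (s - τ)) := by
    refine integral_mono_of_nonneg ?_ (((hψcomp.const_mul _).const_mul _)) ?_
    · refine (ae_restrict_iff' measurableSet_Ioc).2 (ae_of_all _ fun τ hτ => ?_)
      refine integral_nonneg fun y => ?_
      have h0 : (0:ℝ) ≤ (s - τ) ^ (-(1:ℝ)/2) :=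
        Real.rpow_nonneg (by linarith [hτ.2]) _
      exact mul_nonneg (mul_nonneg (mul_nonneg h0 (Real.exp_pos _).le)
        (Real.exp_pos _).le) (abs_nonneg _)
    · exact (ae_restrict_iff' measurableSet_Ioc).2 (ae_of_all _ hinner)
  refine houter.trans ?_
  have heq2 : (∫ τ in Ioc (0:ℝ) s, Ky * ((1 + s) ^ (-(1:ℝ)/2) * ucbPsi c (s - τ)))
      = (Ky * (1 + s) ^ (-(1:ℝ)/2)) * ∫ τ in Ioc (0:ℝ) s, ucbPsi c (s - τ) := by
    rw [← integral_const_mul _ _]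
    congr 1
    ext τ
    ring
  have hchange : (∫ τ in Ioc (0:ℝ) s, ucbPsi c (s - τ)) = ∫ u in Ioc (0:ℝ) s, ucbPsi c u := by
    rw [← intervalIntegral.integral_of_le hs, ← intervalIntegral.integral_of_le hs,
      intervalIntegral.integral_comp_sub_left (ucbPsi c) s, sub_self, sub_zero]
  have hmono2 : (∫ u in Ioc (0:ℝ) s, ucbPsi c u) ≤ K := by
    refine setIntegral_mono_set hψint ?_ (HasSubset.Subset.eventuallyLE Ioc_subset_Ioi_self)
    exact (ae_restrict_iff' measurableSet_Ioi).2
      (ae_of_all _ fun u hu => ucbPsi_nonneg (le_of_lt hu))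
  rw [heq2, hchange]
  calc (Ky * (1 + s) ^ (-(1:ℝ)/2)) * ∫ u in Ioc (0:ℝ) s, ucbPsi c u
      ≤ (Ky * (1 + s) ^ (-(1:ℝ)/2)) * K :=
        mul_le_mul_of_nonneg_left hmono2 (mul_nonneg hKynn hB)
    _ = (Ky * K) * (1 + s) ^ (-(1:ℝ)/2) := by ring
    _ ≤ (Ky * K + 1) * (1 + s) ^ (-(1:ℝ)/2) :=
        mul_le_mul_of_nonneg_right (by linarith) hB
end
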